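/- Let (A, *, α) be a Hom-Jacobi-Jordan algebra over a field K of characteristic 0, V a K-vector space, ρ : A → End(V) a linear map, and φ ∈ End(V) with φ∘ρ(x) = ρ(α(x))∘φ for all x ∈ A. Then (V, ρ, φ) is a representation of (A, *, α) if and only if the direct sum A ⊕ V equipped with the product (x+u)◇(y+v) := x*y + ρ(x)v + ρ(y)u and the linear map (α⊕φ)(x+u) := α(x) + φ(u) is a Hom-Jacobi-Jordan algebra (the semi-direct product A ⋉ V). -/

import Mathlib

/-- A Hom-Jacobi-Jordan algebra structure: the multiplication is bilinear and
commutative, the structure map is multiplicative, and the Hom-Jacobi identity holds. -/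
def IsHomJJ {K A : Type*} [Field K] [AddCommGroup A] [Module K A]
    (mul : A → A → A) (α : A →ₗ[K] A) : Prop :=
  (∀ x y z : A, mul (x + y) z = mul x z + mul y z) ∧
  (∀ (c : K) (x y : A), mul (c • x) y = c • mul x y) ∧
  (∀ x y z : A, mul x (y + z) = mul x y + mul x z) ∧
  (∀ (c : K) (x y : A), mul x (c • y) = c • mul x y) ∧
  (∀ x y : A, α (mul x y) = mul (α x) (α y)) ∧
  (∀ x y : A, mul x y = mul y x) ∧
  (∀ x y z : A, mul (mul x y) (α z) + mul (mul y z) (α x) + mul (mul z x) (α y) = 0)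

/-- A representation (V, ρ, φ) of a Hom-Jacobi-Jordan algebra (A, mul, α):
ρ : A → End(V) is linear (expressed pointwise), φ∘ρ(x) = ρ(α x)∘φ and
ρ(x*y)∘φ = −ρ(α x)∘ρ(y) − ρ(α y)∘ρ(x). -/
def IsRep {K A V : Type*} [Field K] [AddCommGroup A] [Module K A]
    [AddCommGroup V] [Module K V]
    (mul : A → A → A) (α : A →ₗ[K] A) (ρ : A → V → V) (φ : V →ₗ[K] V) : Prop :=
  (∀ (x y : A) (v : V), ρ (x + y) v = ρ x v + ρ y v) ∧
  (∀ (c : K) (x : A) (v : V), ρ (c • x) v = c • ρ x v) ∧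
  (∀ (x : A) (v w : V), ρ x (v + w) = ρ x v + ρ x w) ∧
  (∀ (c : K) (x : A) (v : V), ρ x (c • v) = c • ρ x v) ∧
  (∀ (x : A) (v : V), φ (ρ x v) = ρ (α x) (φ v)) ∧
  (∀ (x y : A) (v : V), ρ (mul x y) (φ v) = -ρ (α x) (ρ y v) - ρ (α y) (ρ x v))

/-- (V, ρ, φ) is a representation of the Hom-Jacobi-Jordan algebra
(A, *, α) iff the direct sum A ⊕ V with product (x+u)◇(y+v) := x*y + ρ(x)v + ρ(y)u
and structure map α⊕φ is a Hom-Jacobi-Jordan algebra (the semi-direct product). -/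
theorem stmt_5 {K A V : Type*} [Field K] [CharZero K]
    [AddCommGroup A] [Module K A] [AddCommGroup V] [Module K V]
    (mul : A → A → A) (α : A →ₗ[K] A)
    (hA : IsHomJJ mul α)
    (ρ : A → V → V) (φ : V →ₗ[K] V)
    (haddl : ∀ (x y : A) (v : V), ρ (x + y) v = ρ x v + ρ y v)
    (hsmull : ∀ (c : K) (x : A) (v : V), ρ (c • x) v = c • ρ x v)
    (haddr : ∀ (x : A) (v w : V), ρ x (v + w) = ρ x v + ρ x w)
    (hsmulr : ∀ (c : K) (x : A) (v : V), ρ x (c • v) = c • ρ x v)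
    (hφρ : ∀ (x : A) (v : V), φ (ρ x v) = ρ (α x) (φ v)) :
    IsRep mul α ρ φ ↔
      IsHomJJ (fun p q : A × V => (mul p.1 q.1, ρ p.1 q.2 + ρ q.1 p.2))
        (α.prodMap φ) := by
  obtain ⟨hal, hsl, har, hsr, hmult, hcomm, hjac⟩ := hA
  have hρz : ∀ x : A, ρ x 0 = 0 := by
    intro x
    have := haddr x 0 0
    rw [add_zero] at this
    exact left_eq_add.mp this
  have hρz' : ∀ v : V, ρ 0 v = 0 := by
    intro v
    have := haddl 0 0 v
    rw [add_zero] at this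
    exact left_eq_add.mp this
  have hmz : ∀ x : A, mul x 0 = 0 := by
    intro x
    have := har x 0 0
    rw [add_zero] at this
    exact left_eq_add.mp this
  have hmz' : ∀ x : A, mul 0 x = 0 := by
    intro x
    have := hal 0 0 x
    rw [add_zero] at this
    exact left_eq_add.mp this
  constructor
  · rintro ⟨-, -, -, -, -, hrep⟩
    refine ⟨?_, ?_, ?_, ?_, ?_, ?_, ?_⟩
    · rintro ⟨x, u⟩ ⟨y, v⟩ ⟨z, w⟩
      simp only [Prod.mk_add_mk, Prod.mk.injEq]
      constructor
      · exact hal x y z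
      · rw [haddl, haddr]; abel
    · rintro c ⟨x, u⟩ ⟨y, v⟩
      simp only [Prod.smul_mk, Prod.mk.injEq]
      constructor
      · exact hsl c x y
      · rw [hsmull, hsmulr, smul_add]
    · rintro ⟨x, u⟩ ⟨y, v⟩ ⟨z, w⟩
      simp only [Prod.mk_add_mk, Prod.mk.injEq]
      constructor
      · exact har x y z
      · rw [haddr, haddl]; abel
    · rintro c ⟨x, u⟩ ⟨y, v⟩
      simp only [Prod.smul_mk, Prod.mk.injEq]
      constructor
      · exact hsr c x y
      · rw [hsmull, hsmulr, smul_add]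
    · rintro ⟨x, u⟩ ⟨y, v⟩
      simp only [LinearMap.prodMap_apply, Prod.map_apply, Prod.mk.injEq]
      constructor
      · exact hmult x y
      · rw [map_add, hφρ, hφρ]
    · rintro ⟨x, u⟩ ⟨y, v⟩
      simp only [Prod.mk.injEq]
      exact ⟨hcomm x y, add_comm _ _⟩
    · rintro ⟨x, u⟩ ⟨y, v⟩ ⟨z, w⟩
      simp only [LinearMap.prodMap_apply, Prod.map_apply, Prod.mk_add_mk, Prod.mk.injEq,
        Prod.mk_eq_zero]
      constructor
      · exact hjac x y z
      · rw [haddr, haddr, haddr, hrep x y w, hrep y z u, hrep z x v]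
        abel
  · rintro ⟨-, -, -, -, -, -, hJ⟩
    refine ⟨haddl, hsmull, haddr, hsmulr, hφρ, ?_⟩
    intro x y v
    have := hJ (x, 0) (y, 0) (0, v)
    simp only [LinearMap.prodMap_apply, Prod.map_apply, Prod.mk_add_mk, Prod.mk_eq_zero,
      map_zero, hρz, hρz', hmz, hmz', add_zero, zero_add] at this
    have h2 := this.2
    linear_combination (norm := abel) h2
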